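/- Let c, d ∈ (−1,1) and let r₁ = (1/((1−c²)(1−d²)))·[[cd−1, c(1−cd), d−c],[d−c, 1−cd, cd−1],[0, 1−c², 0]] and r₂ = [[−1−cd, c+d, d(1+cd)],[0, 0, d²−1],[−c−d, 1+cd, 1+cd]]. Then trace(r₂·r₁·r₂²·r₁²) − trace(r₁·r₂·r₁²·r₂²) = 16cd/((1−c²)(1−d²)). -/

import Mathlib

open Matrix

noncomputable def r1 (c d : ℝ) : Matrix (Fin 3) (Fin 3) ℝ :=
  (1 / ((1 - c^2) * (1 - d^2))) •
    !![c*d - 1, c*(1 - c*d), d - c;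
       d - c, 1 - c*d, c*d - 1;
       0, 1 - c^2, 0]

def r2 (c d : ℝ) : Matrix (Fin 3) (Fin 3) ℝ :=
  !![-1 - c*d, c + d, d*(1 + c*d);
     0, 0, d^2 - 1;
     -c - d, 1 + c*d, 1 + c*d]

theorem pappus_commutator_trace_difference (c d : ℝ)
    (hc : c ∈ Set.Ioo (-1 : ℝ) 1) (hd : d ∈ Set.Ioo (-1 : ℝ) 1) :
    (r2 c d * r1 c d * (r2 c d)^2 * (r1 c d)^2).trace
      - (r1 c d * r2 c d * (r1 c d)^2 * (r2 c d)^2).trace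
      = 16*c*d / ((1 - c^2) * (1 - d^2)) := by
  obtain ⟨hc1, hc2⟩ := hc
  obtain ⟨hd1, hd2⟩ := hd
  have h1 : (1 - c*c) ≠ 0 := by nlinarith
  have h2 : (1 - d*d) ≠ 0 := by nlinarith
  simp only [r1, r2, pow_two, Matrix.smul_mul, Matrix.mul_smul, smul_smul,
    Matrix.trace_smul, smul_eq_mul]
  simp only [Matrix.mul_fin_three, Matrix.trace_fin_three_of]
  have h3 : (1 - c^2) ≠ 0 := by nlinarith
  have h4 : (1 - d^2) ≠ 0 := by nlinarith
  field_simp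
  ring
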